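/- Let M be a finite possibilistic Kripke structure with all transition values of paths positive. For any state s and any set of paths φ, there exists a path π ∈ Paths(s) with π ⊨ φ if and only if Po(s ⊨ φ) > 0. (That is, the CTL formula ∃φ is equivalent to the PoCTL formula Po_{>0}(φ).) -/

import Mathlib

open scoped ENNReal

/-- the set of paths of a possibilistic Kripke structure starting at `s`:
infinite sequences whose consecutive transition possibilities are all positive. -/
def PathsFrom {S : Type*} (P : S → S → ℝ≥0∞) (s : S) : Set (ℕ → S) :=
  {π | π 0 = s ∧ ∀ i, 0 < P (π i) (π (i + 1))}

/-- the possibility `Po(s ⊨ φ)` of the set of paths from `s` satisfying `φ`. -/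
noncomputable def PoSat {S : Type*} (P : S → S → ℝ≥0∞) (s : S) (φ : Set (ℕ → S)) : ℝ≥0∞ :=
  ⨆ π ∈ PathsFrom P s ∩ φ, ⨅ i, P (π i) (π (i + 1))

/-- in a finite possibilistic Kripke structure, for every state `s` and
path event `φ`: some path from `s` satisfies `φ` iff `Po(s ⊨ φ) > 0`,
i.e. `∃φ ≡ Po_{>0}(φ)`. -/
theorem stmt5 {S : Type*} [Fintype S] (P : S → S → ℝ≥0∞)
    (hP1 : ∀ s t, P s t ≤ 1) (hPn : ∀ s, (⨆ t, P s t) = 1)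
    (s : S) (φ : Set (ℕ → S)) :
    (∃ π ∈ PathsFrom P s, π ∈ φ) ↔ 0 < PoSat P s φ := by
  constructor
  · rintro ⟨π, hπ, hφ⟩
    have hpos : 0 < ⨅ i, P (π i) (π (i + 1)) := by
      set f : ℕ → ℝ≥0∞ := fun i => P (π i) (π (i + 1)) with hf
      have hfin : (Set.range f).Finite := by
        apply (Set.finite_range (fun p : S × S => P p.1 p.2)).subset
        rintro x ⟨i, rfl⟩
        exact ⟨(π i, π (i + 1)), rfl⟩
      have hne : (Set.range f).Nonempty := ⟨f 0, ⟨0, rfl⟩⟩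
      have hmem : sInf (Set.range f) ∈ Set.range f := hne.csInf_mem hfin
      obtain ⟨i, hi⟩ := hmem
      have : ⨅ i, f i = f i := by rw [iInf, ← hi]
      rw [this]
      exact hπ.2 i
    calc 0 < ⨅ i, P (π i) (π (i + 1)) := hpos
      _ ≤ PoSat P s φ := le_iSup₂ (f := fun π _ => ⨅ i, P (π i) (π (i + 1))) π ⟨hπ, hφ⟩
  · intro h
    by_contra hcon
    push_neg at hcon
    have : PoSat P s φ = 0 := by
      unfold PoSat
      apply le_antisymm _ zero_le
      apply iSup₂_le
      rintro π ⟨h1, h2⟩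
      exact absurd h2 (hcon π h1)
    simp [this] at h
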